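/- 2 ∈ D_1^{(pq)} if and only if q ≡ ±3 (mod 8). -/

import Mathlib

open Finset Polynomial

noncomputable section

/-- The field `F₄` with four elements. -/
abbrev F4 : Type := GaloisField 2 2

/-- Generic generalized cyclotomic class of index `0` modulo `M`:
`{ g^(2t) * y^k mod M : 0 ≤ t < dHalf, 0 ≤ k < e }`. -/
def GC0 (g y M dHalf e : ℕ) : Finset ℕ :=
  ((Finset.range dHalf) ×ˢ (Finset.range e)).image
    (fun tk => g ^ (2 * tk.1) * y ^ tk.2 % M)

/-- Generic generalized cyclotomic class of index `1` modulo `M`: `g · GC0 (mod M)`. -/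
def GC1 (g y M dHalf e : ℕ) : Finset ℕ :=
  (GC0 g y M dHalf e).image (fun x => g * x % M)

/-- Class of index `h ∈ {0,1}`. -/
def GC (h g y M dHalf e : ℕ) : Finset ℕ :=
  if h = 0 then GC0 g y M dHalf e else GC1 g y M dHalf e

/-- `e_{i,j} = gcd(p^{i-1}(p-1), q^{j-1}(q-1))`. -/
def eij (p q i j : ℕ) : ℕ := Nat.gcd (p ^ (i - 1) * (p - 1)) (q ^ (j - 1) * (q - 1))

/-- `d_{i,j} = p^{i-1}(p-1) q^{j-1}(q-1) / e_{i,j}`. -/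
def dij (p q i j : ℕ) : ℕ := p ^ (i - 1) * (p - 1) * (q ^ (j - 1) * (q - 1)) / eij p q i j

/-- `D_h^{(p^i q^j)}`. -/
def DPQ (p q g y h i j : ℕ) : Finset ℕ :=
  GC h g y (p ^ i * q ^ j) (dij p q i j / 2) (eij p q i j)

/-- `D_h^{(2 p^i q^j)}`. -/
def D2PQ (p q g y h i j : ℕ) : Finset ℕ :=
  GC h g y (2 * (p ^ i * q ^ j)) (dij p q i j / 2) (eij p q i j)

/-- `D_h^{(p^i)}`. -/
def DP (p g h i : ℕ) : Finset ℕ := GC h g 1 (p ^ i) (p ^ (i - 1) * (p - 1) / 2) 1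

/-- `D_h^{(2p^i)}`. -/
def D2P (p g h i : ℕ) : Finset ℕ := GC h g 1 (2 * p ^ i) (p ^ (i - 1) * (p - 1) / 2) 1

/-- `D_h^{(q^j)}`. -/
def DQ (q g h j : ℕ) : Finset ℕ := GC h g 1 (q ^ j) (q ^ (j - 1) * (q - 1) / 2) 1

/-- `D_h^{(2q^j)}`. -/
def D2Q (q g h j : ℕ) : Finset ℕ := GC h g 1 (2 * q ^ j) (q ^ (j - 1) * (q - 1) / 2) 1

/-- `c · A`. -/
def scaled (c : ℕ) (A : Finset ℕ) : Finset ℕ := A.image (fun x => c * x)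

/-- `H_h^{(p^i q^j)} = p^{m-i} q^{n-j} D_h^{(p^i q^j)}`. -/
def HPQ (p q m n g y h i j : ℕ) : Finset ℕ :=
  scaled (p ^ (m - i) * q ^ (n - j)) (DPQ p q g y h i j)

/-- `H_h^{(2 p^i q^j)} = p^{m-i} q^{n-j} D_h^{(2 p^i q^j)}`. -/
def H2PQ (p q m n g y h i j : ℕ) : Finset ℕ :=
  scaled (p ^ (m - i) * q ^ (n - j)) (D2PQ p q g y h i j)

/-- `H_h^{(p^i)} = p^{m-i} q^n D_h^{(p^i)}`. -/
def HP (p q m n g h i : ℕ) : Finset ℕ := scaled (p ^ (m - i) * q ^ n) (DP p g h i)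

/-- `H_h^{(2p^i)} = p^{m-i} q^n D_h^{(2p^i)}`. -/
def H2P (p q m n g h i : ℕ) : Finset ℕ := scaled (p ^ (m - i) * q ^ n) (D2P p g h i)

/-- `H_h^{(q^j)} = p^m q^{n-j} D_h^{(q^j)}`. -/
def HQ (p q m n g h j : ℕ) : Finset ℕ := scaled (p ^ m * q ^ (n - j)) (DQ q g h j)

/-- `H_h^{(2q^j)} = p^m q^{n-j} D_h^{(2q^j)}`. -/
def H2Q (p q m n g h j : ℕ) : Finset ℕ := scaled (p ^ m * q ^ (n - j)) (D2Q q g h j)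

/-- `⋃_{i,j} H_h^{(2p^i q^j)} ∪ ⋃_i H_h^{(2p^i)} ∪ ⋃_j H_h^{(2q^j)}`. -/
def UnionH (p q m n g y h : ℕ) : Finset ℕ :=
  ((Finset.Icc 1 m).biUnion fun i => (Finset.Icc 1 n).biUnion fun j => H2PQ p q m n g y h i j)
    ∪ ((Finset.Icc 1 m).biUnion fun i => H2P p q m n g h i)
    ∪ ((Finset.Icc 1 n).biUnion fun j => H2Q p q m n g h j)

/-- `⋃_{i,j} 2H_h^{(p^i q^j)} ∪ ⋃_i 2H_h^{(p^i)} ∪ ⋃_j 2H_h^{(q^j)}`. -/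
def Union2H (p q m n g y h : ℕ) : Finset ℕ :=
  ((Finset.Icc 1 m).biUnion fun i =>
      (Finset.Icc 1 n).biUnion fun j => scaled 2 (HPQ p q m n g y h i j))
    ∪ ((Finset.Icc 1 m).biUnion fun i => scaled 2 (HP p q m n g h i))
    ∪ ((Finset.Icc 1 n).biUnion fun j => scaled 2 (HQ p q m n g h j))

/-- The quaternary generalized cyclotomic sequence of period `2 p^m q^n`. -/
def seqS (p q m n g y : ℕ) (a b c d e : F4) (u : ℕ) : F4 :=
  let v := u % (2 * (p ^ m * q ^ n))
  if v = 0 then 0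
  else if v = p ^ m * q ^ n then e
  else if v ∈ UnionH p q m n g y 0 then a
  else if v ∈ UnionH p q m n g y 1 then b
  else if v ∈ Union2H p q m n g y 0 then c
  else if v ∈ Union2H p q m n g y 1 then d
  else 0

/-- The generating polynomial `S(x) = ∑_{u=0}^{2p^m q^n - 1} s_u x^u ∈ F₄[x]`. -/
def genPoly (p q m n g y : ℕ) (a b c d e : F4) : Polynomial F4 :=
  ∑ u ∈ Finset.range (2 * (p ^ m * q ^ n)),
    Polynomial.C (seqS p q m n g y a b c d e u) * Polynomial.X ^ u

/-- The linear complexity of a sequence over a field: the least `L > 0` admitting a linear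
recurrence `s_{u+L} = c_1 s_{u+L-1} + ⋯ + c_L s_u`. -/
def LinearComplexity {F : Type*} [Field F] (s : ℕ → F) : ℕ :=
  sInf {L | 0 < L ∧ ∃ c : Fin L → F,
    ∀ u, s (u + L) = ∑ i : Fin L, c i * s (u + L - 1 - (i : ℕ))}

/-- If `g ^ n ≡ 1 (mod N)`, then `g ^ x` only depends on `x mod n`. -/
lemma pow_mod_cycle {g n N : ℕ} (h1 : g ^ n ≡ 1 [MOD N]) {x z : ℕ} (hxz : x ≡ z [MOD n]) :
    g ^ x ≡ g ^ z [MOD N] := by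
  have key : ∀ w : ℕ, g ^ w ≡ g ^ (w % n) [MOD N] := by
    intro w
    conv_lhs => rw [← Nat.div_add_mod w n]
    rw [pow_add, pow_mul]
    calc (g ^ n) ^ (w / n) * g ^ (w % n)
        ≡ 1 ^ (w / n) * g ^ (w % n) [MOD N] := Nat.ModEq.mul ((h1.pow _)) (Nat.ModEq.refl _)
      _ = g ^ (w % n) := by rw [one_pow, one_mul]
  calc g ^ x ≡ g ^ (x % n) [MOD N] := key x
    _ = g ^ (z % n) := by rw [hxz]
    _ ≡ g ^ z [MOD N] := (key z).symm

/-- Discrete logarithm relative to a full-order element in `ZMod q`, `q` prime. -/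
lemma exists_pow_eq_dlog {q : ℕ} [Fact q.Prime] {g : ZMod q} (hord : orderOf g = q - 1)
    (x : ZMod q) (hx : x ≠ 0) : ∃ b, b < q - 1 ∧ g ^ b = x := by
  have hq1 : 1 < q := (Fact.out : q.Prime).one_lt
  have hone : g ^ (q - 1) = 1 := by rw [← hord]; exact pow_orderOf_eq_one g
  have hgu : IsUnit g := by
    refine IsUnit.of_mul_eq_one (g ^ (q - 2)) ?_
    have h : q - 2 + 1 = q - 1 := by omega
    rw [← pow_succ' g (q - 2), h, hone]
  have hgu_ord : orderOf hgu.unit = q - 1 := by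
    rw [← orderOf_units, hgu.unit_spec, hord]
  have hcard : Nat.card (ZMod q)ˣ = q - 1 := by
    rw [Nat.card_eq_fintype_card, ZMod.card_units_eq_totient,
      Nat.totient_prime (Fact.out : q.Prime)]
  have htop : Subgroup.zpowers hgu.unit = ⊤ := by
    apply Subgroup.eq_top_of_card_eq
    rw [Nat.card_zpowers, hgu_ord, hcard]
  have hxu : IsUnit x := isUnit_iff_ne_zero.mpr hx
  have hfin : IsOfFinOrder hgu.unit := by
    rw [← orderOf_pos_iff, hgu_ord]; omega
  have hmem : hxu.unit ∈ Submonoid.powers hgu.unit := by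
    rw [hfin.mem_powers_iff_mem_zpowers, htop]
    exact Subgroup.mem_top _
  obtain ⟨m, hm⟩ := hmem
  refine ⟨m % (q - 1), Nat.mod_lt _ (by omega), ?_⟩
  have hpow : hgu.unit ^ (m % (q - 1)) = hgu.unit ^ m := by
    conv_rhs => rw [← Nat.div_add_mod m (q - 1)]
    rw [pow_add, pow_mul, ← hgu_ord, pow_orderOf_eq_one, one_pow, one_mul]
  have hval := congrArg Units.val (hpow.trans hm)
  simpa [hgu.unit_spec, hxu.unit_spec] using hval

/-- Parity of the discrete log of `x` detects (non-)squareness. -/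
lemma odd_dlog_iff_not_isSquare {q : ℕ} [Fact q.Prime] (hq2 : q ≠ 2) {g : ZMod q}
    (hord : orderOf g = q - 1) {x : ZMod q} (hx : x ≠ 0) {s : ℕ} (hs : g ^ s = x) :
    Odd s ↔ ¬ IsSquare x := by
  have hq : q.Prime := Fact.out
  have hqodd : q % 2 = 1 := Nat.odd_iff.mp (hq.odd_of_ne_two hq2)
  have hq3 : 3 ≤ q := by have := hq.two_le; omega
  constructor
  · intro hodd hsq
    obtain ⟨r, hr⟩ := hsq
    have hr0 : r ≠ 0 := by
      intro h; rw [h, mul_zero] at hr; exact hx hr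
    obtain ⟨c, _, hgc⟩ := exists_pow_eq_dlog hord r hr0
    have heq : g ^ s = g ^ (2 * c) := by
      rw [hs, hr, two_mul, pow_add, hgc]
    have hone : g ^ (q - 1) = 1 := by rw [← hord]; exact pow_orderOf_eq_one g
    have hgu : IsUnit g := IsUnit.of_pow_eq_one hone (by omega)
    have hguord : orderOf hgu.unit = q - 1 := by
      rw [← orderOf_units, hgu.unit_spec, hord]
    have hequ : hgu.unit ^ s = hgu.unit ^ (2 * c) := by
      ext
      simpa [hgu.unit_spec] using heq
    have hmod := pow_eq_pow_iff_modEq.mp hequ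
    rw [hguord] at hmod
    have h2dvd : (2 : ℕ) ∣ q - 1 := by omega
    have hmod2 : s ≡ 2 * c [MOD 2] := hmod.of_dvd h2dvd
    have hs2 : s % 2 = 1 := Nat.odd_iff.mp hodd
    have : (2 * c) % 2 = 0 := by omega
    unfold Nat.ModEq at hmod2; omega
  · intro hnsq
    rcases Nat.even_or_odd s with he | ho
    · exact absurd (by
        obtain ⟨c, hc⟩ := he
        exact ⟨g ^ c, by rw [← hs, hc, pow_add]⟩) hnsq
    · exact ho

theorem statement3
    (p q m n g y : ℕ)
    (hp : p.Prime) (hq : q.Prime) (hpq : p ≠ q) (hpodd : Odd p) (hqodd : Odd q)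
    (hm : 1 ≤ m) (hn : 1 ≤ n) (hgodd : Odd g)
    (hgp : ∀ i, 1 ≤ i → i ≤ m → orderOf (g : ZMod (p ^ i)) = Nat.totient (p ^ i))
    (hg2p : ∀ i, 1 ≤ i → i ≤ m → orderOf (g : ZMod (2 * p ^ i)) = Nat.totient (2 * p ^ i))
    (hgq : ∀ j, 1 ≤ j → j ≤ n → orderOf (g : ZMod (q ^ j)) = Nat.totient (q ^ j))
    (hg2q : ∀ j, 1 ≤ j → j ≤ n → orderOf (g : ZMod (2 * q ^ j)) = Nat.totient (2 * q ^ j))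
    (hylt : y < 2 * (p ^ m * q ^ n))
    (hyg : y ≡ g [MOD 2 * p ^ m]) (hy1 : y ≡ 1 [MOD 2 * q ^ n])
    : (2 ∈ DPQ p q g y 1 1 1) ↔ (q % 8 = 3 ∨ q % 8 = 5) := by
  haveI : Fact p.Prime := ⟨hp⟩
  haveI : Fact q.Prime := ⟨hq⟩
  have hp2 : p ≠ 2 := by rintro rfl; exact (by decide : ¬ Odd 2) hpodd
  have hq2 : q ≠ 2 := by rintro rfl; exact (by decide : ¬ Odd 2) hqodd
  have hp3 : 3 ≤ p := by have := hp.two_le; omega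
  have hq3 : 3 ≤ q := by have := hq.two_le; omega
  set N := p * q with hN
  have hN2 : 2 < N := by calc 2 < 3 * 3 := by norm_num
                          _ ≤ p * q := Nat.mul_le_mul hp3 hq3
  set P := p - 1 with hP
  set Q := q - 1 with hQ
  have hPpos : 2 ≤ P := by omega
  have hQpos : 2 ≤ Q := by omega
  have hQeven : Q % 2 = 0 := by
    have := Nat.odd_iff.mp hqodd; omega
  set E := Nat.gcd P Q with hE
  set D := P * Q / E with hD
  have hEpos : 0 < E := Nat.gcd_pos_of_pos_left _ (by omega)
  -- order facts
  have hop : orderOf (g : ZMod p) = P := by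
    have h := hgp 1 le_rfl hm
    rw [pow_one] at h
    rw [h, Nat.totient_prime hp]
  have hoq : orderOf (g : ZMod q) = Q := by
    have h := hgq 1 le_rfl hn
    rw [pow_one] at h
    rw [h, Nat.totient_prime hq]
  -- natural number congruences coming from the orders
  have hgP : g ^ P ≡ 1 [MOD p] := by
    have h1 : (g : ZMod p) ^ P = 1 := by rw [← hop]; exact pow_orderOf_eq_one _
    have : ((g ^ P : ℕ) : ZMod p) = ((1 : ℕ) : ZMod p) := by push_cast; exact h1
    exact (ZMod.natCast_eq_natCast_iff _ _ _).mp this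
  have hgQ : g ^ Q ≡ 1 [MOD q] := by
    have h1 : (g : ZMod q) ^ Q = 1 := by rw [← hoq]; exact pow_orderOf_eq_one _
    have : ((g ^ Q : ℕ) : ZMod q) = ((1 : ℕ) : ZMod q) := by push_cast; exact h1
    exact (ZMod.natCast_eq_natCast_iff _ _ _).mp this
  -- y congruences
  have hyp : y ≡ g [MOD p] := by
    refine hyg.of_dvd ?_
    exact Dvd.dvd.mul_left (dvd_pow_self p (by omega : m ≠ 0)) 2
  have hyq : y ≡ 1 [MOD q] := by
    refine hy1.of_dvd ?_
    exact Dvd.dvd.mul_left (dvd_pow_self q (by omega : n ≠ 0)) 2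
  have h2p : (2 : ZMod p) ≠ 0 := by
    have : ((2 : ℕ) : ZMod p) ≠ 0 := by
      rw [Ne, ZMod.natCast_eq_zero_iff]
      intro hdvd; exact absurd (Nat.le_of_dvd (by norm_num) hdvd) (by omega)
    simpa using this
  have h2q : (2 : ZMod q) ≠ 0 := by
    have : ((2 : ℕ) : ZMod q) ≠ 0 := by
      rw [Ne, ZMod.natCast_eq_zero_iff]
      intro hdvd; exact absurd (Nat.le_of_dvd (by norm_num) hdvd) (by omega)
    simpa using this
  -- membership unfolding
  have hmem : (2 ∈ DPQ p q g y 1 1 1) ↔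
      ∃ t k : ℕ, (t < D / 2 ∧ k < E) ∧ g * (g ^ (2 * t) * y ^ k % N) % N = 2 := by
    simp only [DPQ, GC, GC1, GC0, eij, dij, pow_one, Nat.sub_self, pow_zero, one_mul,
      if_neg (one_ne_zero), Finset.mem_image, Finset.mem_product, Finset.mem_range]
    constructor
    · rintro ⟨x, ⟨⟨t, k⟩, ⟨ht, hk⟩, rfl⟩, hx⟩
      exact ⟨t, k, ⟨ht, hk⟩, hx⟩
    · rintro ⟨t, k, ⟨ht, hk⟩, hx⟩
      exact ⟨_, ⟨⟨t, k⟩, ⟨ht, hk⟩, rfl⟩, hx⟩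
  -- the key modular reformulation
  have hmodeq : ∀ t k : ℕ, g * (g ^ (2 * t) * y ^ k % N) % N = 2 ↔
      g ^ (2 * t + 1) * y ^ k ≡ 2 [MOD N] := by
    intro t k
    have hmul : g * (g ^ (2 * t) * y ^ k % N) ≡ g ^ (2 * t + 1) * y ^ k [MOD N] := by
      calc g * (g ^ (2 * t) * y ^ k % N)
          ≡ g * (g ^ (2 * t) * y ^ k) [MOD N] := (Nat.mod_modEq _ _).mul_left g
        _ = g ^ (2 * t + 1) * y ^ k := by ring
    constructor
    · intro h
      calc g ^ (2 * t + 1) * y ^ k ≡ g * (g ^ (2 * t) * y ^ k % N) [MOD N] := hmul.symm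
        _ ≡ 2 [MOD N] := by
            show _ % N = 2 % N
            rw [h, Nat.mod_eq_of_lt hN2]
    · intro h
      have := hmul.trans h
      show _ = 2
      have h2 : g * (g ^ (2 * t) * y ^ k % N) % N = 2 % N := this
      rwa [Nat.mod_eq_of_lt hN2] at h2
  rw [hmem]
  constructor
  · -- forward direction
    rintro ⟨t, k, ⟨ht, hk⟩, hx⟩
    rw [hmodeq] at hx
    have hq_dvd : q ∣ N := Dvd.intro_left p rfl
    have hmq : g ^ (2 * t + 1) * y ^ k ≡ 2 [MOD q] := hx.of_dvd hq_dvd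
    have hyk : y ^ k ≡ 1 [MOD q] := by simpa using hyq.pow k
    have hgq2 : g ^ (2 * t + 1) ≡ 2 [MOD q] := by
      calc g ^ (2 * t + 1) = g ^ (2 * t + 1) * 1 := (mul_one _).symm
        _ ≡ g ^ (2 * t + 1) * y ^ k [MOD q] := hyk.symm.mul_left _
        _ ≡ 2 [MOD q] := hmq
    have hzm : (g : ZMod q) ^ (2 * t + 1) = 2 := by
      have := (ZMod.natCast_eq_natCast_iff _ _ _).mpr hgq2
      push_cast at this
      exact this
    have hns : ¬ IsSquare (2 : ZMod q) :=
      (odd_dlog_iff_not_isSquare hq2 hoq h2q hzm).mp ⟨t, by ring⟩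
    rw [ZMod.exists_sq_eq_two_iff hq2] at hns
    have hqodd' := Nat.odd_iff.mp hqodd
    omega
  · -- reverse direction
    intro hq8
    have hns : ¬ IsSquare (2 : ZMod q) := by
      rw [ZMod.exists_sq_eq_two_iff hq2]; omega
    -- discrete logs
    obtain ⟨b, hbQ, hgb⟩ := exists_pow_eq_dlog hoq (2 : ZMod q) h2q
    obtain ⟨a, haP, hga⟩ := exists_pow_eq_dlog hop (2 : ZMod p) h2p
    have hbodd : Odd b := (odd_dlog_iff_not_isSquare hq2 hoq h2q hgb).mpr hns
    have hb2 : b % 2 = 1 := Nat.odd_iff.mp hbodd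
    -- natural congruences for the dlogs
    have hgbn : g ^ b ≡ 2 [MOD q] := by
      have : ((g ^ b : ℕ) : ZMod q) = ((2 : ℕ) : ZMod q) := by push_cast; exact hgb
      exact (ZMod.natCast_eq_natCast_iff _ _ _).mp this
    have hgan : g ^ a ≡ 2 [MOD p] := by
      have : ((g ^ a : ℕ) : ZMod p) = ((2 : ℕ) : ZMod p) := by push_cast; exact hga
      exact (ZMod.natCast_eq_natCast_iff _ _ _).mp this
    -- setup for the CRT-style construction
    have hEP : E ∣ P := Nat.gcd_dvd_left _ _
    have hEQ : E ∣ Q := Nat.gcd_dvd_right _ _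
    set P' := P / E with hP'
    set Q' := Q / E with hQ'
    have hPP : P = E * P' := (Nat.mul_div_cancel' hEP).symm
    have hQQ : Q = E * Q' := (Nat.mul_div_cancel' hEQ).symm
    have hP'pos : 0 < P' := by
      rcases Nat.eq_zero_or_pos P' with h | h
      · rw [h, mul_zero] at hPP; omega
      · exact h
    have hcop : Nat.Coprime Q' P' := (Nat.coprime_div_gcd_div_gcd hEpos).symm
    haveI : NeZero P' := ⟨by omega⟩
    set a' := a + P * (b + E) with ha'
    have hba' : b ≤ a' := by
      have h1 : b + E ≤ P * (b + E) := Nat.le_mul_of_pos_left _ (by omega)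
      omega
    set c := a' - b with hc
    set u := ((Q' : ZMod P')⁻¹ * ((c / E : ℕ) : ZMod P')).val with hu
    have hu_lt : u < P' := ZMod.val_lt _
    have hQ'u : Q' * u ≡ c / E [MOD P'] := by
      have h1 : ((Q' * u : ℕ) : ZMod P') = ((c / E : ℕ) : ZMod P') := by
        push_cast
        rw [hu, ZMod.natCast_zmod_val, ← mul_assoc, ZMod.coe_mul_inv_eq_one Q' hcop, one_mul]
      exact (ZMod.natCast_eq_natCast_iff _ _ _).mp h1
    have hQu : Q * u ≡ E * (c / E) [MOD P] := by
      have h1 := Nat.ModEq.mul_left' (c := E) hQ'u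
      rw [← hPP] at h1
      calc Q * u = E * (Q' * u) := by rw [hQQ]; ring
        _ ≡ E * (c / E) [MOD P] := h1
    set k := c % E with hk
    have hkE : k < E := Nat.mod_lt _ hEpos
    set s := b + Q * u with hs
    -- congruence mod P
    have hsk : s + k ≡ a' [MOD P] := by
      have hdm : E * (c / E) + c % E = c := Nat.div_add_mod c E
      calc s + k = b + (Q * u + c % E) := by rw [hs, hk]; ring
        _ ≡ b + (E * (c / E) + c % E) [MOD P] := ((hQu.add_right (c % E)).add_left b)
        _ = b + c := by rw [hdm]
        _ = a' := by omega
    -- congruence mod Q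
    have hsb : s ≡ b [MOD Q] := by
      show s % Q = b % Q
      rw [hs, Nat.add_mul_mod_self_left]
    -- size bound
    have hDval : D = Q * P' := by
      rw [hD, hPP, Nat.mul_assoc, Nat.mul_div_cancel_left _ hEpos, Nat.mul_comm]
    have hs_lt : s < D := by
      have h1 : Q * u ≤ Q * (P' - 1) := Nat.mul_le_mul_left _ (by omega)
      have h2 : Q * (P' - 1) + Q = Q * P' := by
        have h3 : P' - 1 + 1 = P' := by omega
        calc Q * (P' - 1) + Q = Q * (P' - 1 + 1) := by ring
          _ = Q * P' := by rw [h3]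
      omega
    -- parity
    have hQu2 : (Q * u) % 2 = 0 := by
      have : (2 : ℕ) ∣ Q * u := Dvd.dvd.mul_right (by omega) u
      omega
    have hsodd : s % 2 = 1 := by omega
    have hDeven : D % 2 = 0 := by
      have : (2 : ℕ) ∣ Q * P' := Dvd.dvd.mul_right (by omega) P'
      omega
    refine ⟨s / 2, k, ⟨by omega, hkE⟩, ?_⟩
    rw [hmodeq]
    have h2s : 2 * (s / 2) + 1 = s := by omega
    rw [h2s]
    -- now prove g ^ s * y ^ k ≡ 2 [MOD N]
    have hmodp : g ^ s * y ^ k ≡ 2 [MOD p] := by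
      calc g ^ s * y ^ k ≡ g ^ s * g ^ k [MOD p] := (hyp.pow k).mul_left _
        _ = g ^ (s + k) := (pow_add g s k).symm
        _ ≡ g ^ a' [MOD p] := pow_mod_cycle hgP hsk
        _ ≡ g ^ a [MOD p] := by
            refine pow_mod_cycle hgP ?_
            show a' % P = a % P
            rw [ha', Nat.add_mul_mod_self_left]
        _ ≡ 2 [MOD p] := hgan
    have hmodq : g ^ s * y ^ k ≡ 2 [MOD q] := by
      calc g ^ s * y ^ k ≡ g ^ s * 1 ^ k [MOD q] := (hyq.pow k).mul_left _
        _ = g ^ s := by rw [one_pow, mul_one]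
        _ ≡ g ^ b [MOD q] := pow_mod_cycle hgQ hsb
        _ ≡ 2 [MOD q] := hgbn
    have hcopPQ : Nat.Coprime p q := (Nat.coprime_primes hp hq).mpr hpq
    exact (Nat.modEq_and_modEq_iff_modEq_mul hcopPQ).mp ⟨hmodp, hmodq⟩

end
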